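/- Let n ≥ 8, Z = {z_1, ..., z_{2n}}, and partition Z into 2m blocks (intervals) of size 4 where n = 4m. Let (Π₀, Π₁) be a partition of Z induced by an interval [a, b] with 2n/3 ≤ |Π₀|, |Π₁| ≤ 4n/3, and let R be a (Π₀, Π₁)-set rectangle, i.e., R = {s ∪ t : s ∈ S, t ∈ T} for some S ⊆ 𝒫(Π₀), T ⊆ 𝒫(Π₁). Then there exists a partition (Γ₀, Γ₁) of Z induced by an interval, with 2n/3 ≤ |Γ₀|, |Γ₁| ≤ 4n/3, such that every size-4 block is entirely contained in Γ₀ or in Γ₁ ('neat'), and there exist pairwise disjoint (Γ₀, Γ₁)-set rectangles R_1, ..., R_k with k ≤ 256 and R = R_1 ∪ ... ∪ R_k. -/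

import Mathlib

/-- `R` is a `(P0, P1)`-set rectangle: `R = {s ∪ t : s ∈ S, t ∈ T}` for some
`S ⊆ 𝒫(P0)`, `T ⊆ 𝒫(P1)`. -/
def IsSetRect {n : ℕ} (P0 P1 : Finset (Fin (2 * n)))
    (R : Set (Finset (Fin (2 * n)))) : Prop :=
  ∃ S T : Set (Finset (Fin (2 * n))),
    (∀ s ∈ S, s ⊆ P0) ∧ (∀ t ∈ T, t ⊆ P1) ∧
    R = {u | ∃ s ∈ S, ∃ t ∈ T, u = s ∪ t}

/-- `(P0, P1)` is a partition of `Fin (2*n)` induced by an interval `[a, b]`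
(0-indexed), with both parts of size between `2n/3` and `4n/3` (stated
multiplicatively). -/
def IsOrderedBalancedPartition (n : ℕ) (P0 P1 : Finset (Fin (2 * n))) : Prop :=
  P0 ∪ P1 = Finset.univ ∧ Disjoint P0 P1 ∧
  (∃ a b : ℕ, a ≤ b ∧ b < 2 * n ∧
    (P0 = Finset.univ.filter (fun z : Fin (2 * n) => a ≤ z.1 ∧ z.1 ≤ b) ∨
     P1 = Finset.univ.filter (fun z : Fin (2 * n) => a ≤ z.1 ∧ z.1 ≤ b))) ∧
  2 * n ≤ 3 * P0.card ∧ 3 * P0.card ≤ 4 * n ∧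
  2 * n ≤ 3 * P1.card ∧ 3 * P1.card ≤ 4 * n

/-- The `i`-th size-4 block (for `i < n/2`, i.e. `i < 2m` where `n = 4m`) of the ground
set `Fin (2*n)` is `{4*i, ..., 4*i+3}`. -/
def NeatPartition (n : ℕ) (G0 G1 : Finset (Fin (2 * n))) : Prop :=
  ∀ i < n / 2,
    (Finset.univ.filter (fun z : Fin (2 * n) => 4 * i ≤ z.1 ∧ z.1 < 4 * i + 4)) ⊆ G0 ∨
    (Finset.univ.filter (fun z : Fin (2 * n) => 4 * i ≤ z.1 ∧ z.1 < 4 * i + 4)) ⊆ G1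

section PropLemmas
variable {xs xt xc p0 g0 p1 g1 : Prop}

lemma propL1 (h1 : (xs ∨ xt) ∧ ((p0 ∧ g1) ∨ (p1 ∧ g0)) ↔ xc)
    (h4 : xt → p1) (h5 : p0 → p1 → False) :
    xs ∧ (p0 ∧ g1) ↔ xc ∧ (p0 ∧ g1) := by
  constructor
  · rintro ⟨hs, hd⟩; exact ⟨h1.mp ⟨Or.inl hs, Or.inl hd⟩, hd⟩
  · rintro ⟨hc, hd⟩
    rcases (h1.mpr hc).1 with h | h
    · exact ⟨h, hd⟩
    · exact (h5 hd.1 (h4 h)).elim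

lemma propL2 (h1 : (xs ∨ xt) ∧ ((p0 ∧ g1) ∨ (p1 ∧ g0)) ↔ xc)
    (h3 : xs → p0) (h5 : p0 → p1 → False) :
    xt ∧ (p1 ∧ g0) ↔ xc ∧ (p1 ∧ g0) := by
  constructor
  · rintro ⟨ht, hd⟩; exact ⟨h1.mp ⟨Or.inr ht, Or.inr hd⟩, hd⟩
  · rintro ⟨hc, hd⟩
    rcases (h1.mpr hc).1 with h | h
    · exact (h5 (h3 h) hd.1).elim
    · exact ⟨h, hd⟩

lemma propL3 : xs ∨ xt ↔
    ((xs ∧ ¬(p0 ∧ g1)) ∨ (xt ∧ (p1 ∧ g0))) ∨ ((xt ∧ ¬(p1 ∧ g0)) ∨ (xs ∧ (p0 ∧ g1))) := by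
  classical
  constructor
  · rintro (h | h)
    · by_cases hd : p0 ∧ g1
      · exact Or.inr (Or.inr ⟨h, hd⟩)
      · exact Or.inl (Or.inl ⟨h, hd⟩)
    · by_cases hd : p1 ∧ g0
      · exact Or.inl (Or.inr ⟨h, hd⟩)
      · exact Or.inr (Or.inl ⟨h, hd⟩)
  · rintro ((⟨h, -⟩ | ⟨h, -⟩) | (⟨h, -⟩ | ⟨h, -⟩))
    · exact Or.inl h
    · exact Or.inr h
    · exact Or.inr h
    · exact Or.inl h

lemma propL4 (h1 : xs ∧ (p0 ∧ g1) ↔ xc ∧ (p0 ∧ g1))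
    (h2 : xt ∧ (p1 ∧ g0) ↔ xc ∧ (p1 ∧ g0)) :
    ((xs ∧ ¬(p0 ∧ g1)) ∨ (xc ∧ (p1 ∧ g0))) ∨ ((xt ∧ ¬(p1 ∧ g0)) ∨ (xc ∧ (p0 ∧ g1)))
      ↔ xs ∨ xt := by
  classical
  constructor
  · rintro ((⟨h, -⟩ | h) | (⟨h, -⟩ | h))
    · exact Or.inl h
    · exact Or.inr (h2.mpr h).1
    · exact Or.inr h
    · exact Or.inl (h1.mpr h).1
  · rintro (h | h)
    · by_cases hd : p0 ∧ g1
      · exact Or.inr (Or.inr (h1.mp ⟨h, hd⟩))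
      · exact Or.inl (Or.inl ⟨h, hd⟩)
    · by_cases hd : p1 ∧ g0
      · exact Or.inl (Or.inr (h2.mp ⟨h, hd⟩))
      · exact Or.inr (Or.inl ⟨h, hd⟩)

lemma propL5 (h1 : xs ∧ (p0 ∧ g1) ↔ xc ∧ (p0 ∧ g1))
    (h2 : xt ∧ (p1 ∧ g0) ↔ xc ∧ (p1 ∧ g0))
    (h3 : xs → p0) (h4 : xt → p1) (h5 : p0 → p1 → False)
    (h6 : xc → (p0 ∧ g1) ∨ (p1 ∧ g0)) :
    (xs ∨ xt) ∧ ((p0 ∧ g1) ∨ (p1 ∧ g0)) ↔ xc := by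
  constructor
  · rintro ⟨hst, hd | hd⟩
    · rcases hst with h | h
      · exact (h1.mp ⟨h, hd⟩).1
      · exact (h5 hd.1 (h4 h)).elim
    · rcases hst with h | h
      · exact (h5 (h3 h) hd.1).elim
      · exact (h2.mp ⟨h, hd⟩).1
  · intro hc
    rcases h6 hc with hd | hd
    · exact ⟨Or.inl (h1.mpr ⟨hc, hd⟩).1, Or.inl hd⟩
    · exact ⟨Or.inr (h2.mpr ⟨hc, hd⟩).1, Or.inr hd⟩

end PropLemmas

lemma piece18 {n : ℕ} (P0 P1 G0 G1 : Finset (Fin (2 * n)))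
    (hP : Disjoint P0 P1) (hG : G0 ∪ G1 = Finset.univ)
    (S T : Set (Finset (Fin (2 * n))))
    (hS : ∀ s ∈ S, s ⊆ P0) (hT : ∀ t ∈ T, t ⊆ P1)
    (c : Finset (Fin (2 * n))) (hc : c ⊆ (P0 ∩ G1) ∪ (P1 ∩ G0)) :
    IsSetRect G0 G1
      {u | (∃ s ∈ S, ∃ t ∈ T, u = s ∪ t) ∧ u ∩ ((P0 ∩ G1) ∪ (P1 ∩ G0)) = c} := by
  classical
  have hPd : ∀ x, x ∈ P0 → x ∈ P1 → False :=
    fun x h1 h2 => (Finset.disjoint_left.mp hP h1) h2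
  have hGc : ∀ x : Fin (2 * n), x ∈ G0 ∨ x ∈ G1 := by
    intro x
    have : x ∈ G0 ∪ G1 := by rw [hG]; exact Finset.mem_univ x
    simpa [Finset.mem_union] using this
  refine ⟨{v | ∃ s ∈ S, s ∩ (P0 ∩ G1) = c ∩ (P0 ∩ G1) ∧ v = (s \ (P0 ∩ G1)) ∪ (c ∩ (P1 ∩ G0))},
          {v | ∃ t ∈ T, t ∩ (P1 ∩ G0) = c ∩ (P1 ∩ G0) ∧ v = (t \ (P1 ∩ G0)) ∪ (c ∩ (P0 ∩ G1))},
          ?_, ?_, ?_⟩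
  · rintro v ⟨s, hs, -, rfl⟩ x hx
    have hs' : ∀ y, y ∈ s → y ∈ P0 := fun y hy => hS s hs hy
    simp only [Finset.mem_union, Finset.mem_sdiff, Finset.mem_inter] at hx
    rcases hGc x with h0 | h1
    · exact h0
    · rcases hx with ⟨hxs, hnd⟩ | ⟨-, -, h0⟩
      · exact absurd ⟨hs' x hxs, h1⟩ hnd
      · exact h0
  · rintro v ⟨t, ht, -, rfl⟩ x hx
    have ht' : ∀ y, y ∈ t → y ∈ P1 := fun y hy => hT t ht hy
    simp only [Finset.mem_union, Finset.mem_sdiff, Finset.mem_inter] at hx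
    rcases hGc x with h0 | h1
    · rcases hx with ⟨hxt, hnd⟩ | ⟨-, -, h1⟩
      · exact absurd ⟨ht' x hxt, h0⟩ hnd
      · exact h1
    · exact h1
  · ext u
    simp only [Set.mem_setOf_eq]
    constructor
    · rintro ⟨⟨s, hs, t, ht, rfl⟩, htrace⟩
      have hs' : ∀ y, y ∈ s → y ∈ P0 := fun y hy => hS s hs hy
      have ht' : ∀ y, y ∈ t → y ∈ P1 := fun y hy => hT t ht hy
      have htr := Finset.ext_iff.mp htrace
      have hsD0 : s ∩ (P0 ∩ G1) = c ∩ (P0 ∩ G1) := by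
        ext x
        have h1 := htr x
        simp only [Finset.mem_inter, Finset.mem_union] at h1 ⊢
        exact propL1 h1 (ht' x) (hPd x)
      have htD1 : t ∩ (P1 ∩ G0) = c ∩ (P1 ∩ G0) := by
        ext x
        have h1 := htr x
        simp only [Finset.mem_inter, Finset.mem_union] at h1 ⊢
        exact propL2 h1 (hs' x) (hPd x)
      refine ⟨_, ⟨s, hs, hsD0, rfl⟩, _, ⟨t, ht, htD1, rfl⟩, ?_⟩
      rw [← hsD0, ← htD1]
      ext x
      simp only [Finset.mem_union, Finset.mem_sdiff, Finset.mem_inter]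
      exact propL3
    · rintro ⟨v, ⟨s, hs, hsc, rfl⟩, w, ⟨t, ht, htc, rfl⟩, rfl⟩
      have hs' : ∀ y, y ∈ s → y ∈ P0 := fun y hy => hS s hs hy
      have ht' : ∀ y, y ∈ t → y ∈ P1 := fun y hy => hT t ht hy
      have hsc' := Finset.ext_iff.mp hsc
      have htc' := Finset.ext_iff.mp htc
      have hu : (s \ (P0 ∩ G1)) ∪ (c ∩ (P1 ∩ G0)) ∪ ((t \ (P1 ∩ G0)) ∪ (c ∩ (P0 ∩ G1)))
          = s ∪ t := by
        ext x
        have h1 := hsc' x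
        have h2 := htc' x
        simp only [Finset.mem_union, Finset.mem_sdiff, Finset.mem_inter] at h1 h2 ⊢
        exact propL4 h1 h2
      refine ⟨⟨s, hs, t, ht, hu⟩, ?_⟩
      rw [hu]
      ext x
      have h1 := hsc' x
      have h2 := htc' x
      have h6 : x ∈ c → x ∈ (P0 ∩ G1) ∪ (P1 ∩ G0) := fun h => hc h
      simp only [Finset.mem_union, Finset.mem_sdiff, Finset.mem_inter] at h1 h2 h6 ⊢
      exact propL5 h1 h2 (hs' x) (ht' x) (hPd x) h6

lemma decomp18 {n : ℕ} (P0 P1 G0 G1 : Finset (Fin (2 * n)))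
    (hP : Disjoint P0 P1) (hG : G0 ∪ G1 = Finset.univ)
    (hD : ((P0 ∩ G1) ∪ (P1 ∩ G0)).card ≤ 8)
    (R : Set (Finset (Fin (2 * n)))) (hR : IsSetRect P0 P1 R) :
    ∃ k : ℕ, k ≤ 256 ∧ ∃ Rs : Fin k → Set (Finset (Fin (2 * n))),
      (∀ i, IsSetRect G0 G1 (Rs i)) ∧
      Pairwise (Function.onFun Disjoint Rs) ∧
      R = ⋃ i, Rs i := by
  classical
  obtain ⟨S, T, hS, hT, rfl⟩ := hR
  set D : Finset (Fin (2 * n)) := (P0 ∩ G1) ∪ (P1 ∩ G0) with hDdef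
  refine ⟨D.powerset.card, ?_, fun i =>
    {u | (∃ s ∈ S, ∃ t ∈ T, u = s ∪ t) ∧ u ∩ D = (D.powerset.equivFin.symm i : Finset (Fin (2 * n)))},
    ?_, ?_, ?_⟩
  · rw [Finset.card_powerset]
    calc 2 ^ D.card ≤ 2 ^ 8 := Nat.pow_le_pow_right (by norm_num) hD
      _ = 256 := by norm_num
  · intro i
    have hmem := (D.powerset.equivFin.symm i).2
    rw [Finset.mem_powerset] at hmem
    exact piece18 P0 P1 G0 G1 hP hG S T hS hT _ hmem
  · intro i j hij
    rw [Function.onFun]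
    rw [Set.disjoint_left]
    rintro u ⟨-, h1⟩ ⟨-, h2⟩
    apply hij
    apply D.powerset.equivFin.symm.injective
    exact Subtype.ext (h1 ▸ h2 ▸ rfl)
  · ext u
    simp only [Set.mem_iUnion, Set.mem_setOf_eq]
    constructor
    · intro hu
      have hsub : u ∩ D ∈ D.powerset := by
        rw [Finset.mem_powerset]; exact Finset.inter_subset_right
      refine ⟨D.powerset.equivFin ⟨u ∩ D, hsub⟩, hu, ?_⟩
      rw [Equiv.symm_apply_apply]
    · rintro ⟨i, hu, -⟩
      exact hu

lemma arith18 (m a b : ℕ) (hab : a ≤ b) (hb : b < 8*m)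
    (hc1 : 8*m ≤ 3*(b+1-a)) (hc2 : 3*(b+1-a) ≤ 16*m) :
    ∃ a' j : ℕ, a' % 4 = 0 ∧ a' ≤ a ∧ a - a' ≤ 3 ∧ 1 ≤ j ∧
      a' + 4*j ≤ 8*m ∧ 2*m ≤ 3*j ∧ 3*j ≤ 4*m ∧
      b ≤ a' + 4*j - 1 + 5 ∧ a' + 4*j - 1 ≤ b + 5 := by
  refine ⟨a - a % 4,
    if (b - (a - a % 4) + 1)/4 < (2*m+2)/3 then (2*m+2)/3
    else if (4*m)/3 < (b - (a - a % 4) + 1)/4 then (4*m)/3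
    else (b - (a - a % 4) + 1)/4, ?_⟩
  split_ifs <;> omega

lemma card_filter_le18 (N c d : ℕ) (p : Fin N → Prop) [DecidablePred p]
    (hp : ∀ z : Fin N, p z → c ≤ z.1 ∧ z.1 < d) :
    (Finset.univ.filter p).card ≤ d - c := by
  rw [← Nat.card_Ico c d]
  apply Finset.card_le_card_of_injOn (fun z : Fin N => z.1)
  · intro z hz
    simp only [Finset.mem_coe, Finset.mem_filter] at hz
    have := hp z hz.2
    simp only [Finset.mem_coe, Finset.mem_Ico]
    omega
  · intro x _ y _ h
    exact Fin.val_injective h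

lemma card_filter_Icc18 (N a b : ℕ) (hb : b < N) :
    (Finset.univ.filter fun z : Fin N => a ≤ z.1 ∧ z.1 ≤ b).card = b + 1 - a := by
  rw [← Nat.card_Icc a b]
  apply Finset.card_bij (fun z _ => z.1)
  · intro z hz; simp only [Finset.mem_filter] at hz; simp only [Finset.mem_Icc]; omega
  · intro x hx y hy h; exact Fin.val_injective h
  · intro x hx
    simp only [Finset.mem_Icc] at hx
    exact ⟨⟨x, by omega⟩, by simp; omega, rfl⟩

lemma main18 (n m a b : ℕ) (hm : n = 4*m) (hm2 : 2 ≤ m)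
    (hab : a ≤ b) (hb : b < 2*n)
    (P0 P1 : Finset (Fin (2*n)))
    (hP0 : P0 = Finset.univ.filter (fun z : Fin (2*n) => a ≤ z.1 ∧ z.1 ≤ b))
    (hcov : P0 ∪ P1 = Finset.univ) (hdisj : Disjoint P0 P1)
    (hc1 : 2*n ≤ 3*P0.card) (hc2 : 3*P0.card ≤ 4*n) :
    ∃ G0 G1 : Finset (Fin (2*n)),
      IsOrderedBalancedPartition n G0 G1 ∧ NeatPartition n G0 G1 ∧
      ((P0 ∩ G1) ∪ (P1 ∩ G0)).card ≤ 8 := by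
  classical
  have hcard : P0.card = b + 1 - a := by rw [hP0]; exact card_filter_Icc18 (2*n) a b hb
  rw [hcard] at hc1 hc2
  obtain ⟨a', j, hmod, ha'a, ha'3, hj1, hsum, hjlo, hjhi, hbb1, hbb2⟩ :=
    arith18 m a b hab (by omega) (by omega) (by omega)
  set b' := a' + 4*j - 1 with hb'def
  have hb'lt : b' < 2*n := by omega
  have hab' : a' ≤ b' := by omega
  have hb'mod : b' % 4 = 3 := by omega
  set G0 : Finset (Fin (2*n)) :=
    Finset.univ.filter (fun z : Fin (2*n) => a' ≤ z.1 ∧ z.1 ≤ b') with hG0def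
  refine ⟨G0, G0ᶜ, ?_, ?_, ?_⟩
  · -- balanced partition
    have hcardG0 : G0.card = b' + 1 - a' := card_filter_Icc18 (2*n) a' b' hb'lt
    have hcardG1 : (G0ᶜ).card = 2*n - G0.card := by
      rw [Finset.card_compl, Fintype.card_fin]
    refine ⟨Finset.union_compl G0, disjoint_compl_right,
      ⟨a', b', hab', hb'lt, Or.inl hG0def⟩, ?_, ?_, ?_, ?_⟩ <;> omega
  · -- neat
    intro i hi
    have hi2 : i < 2*m := by omega
    by_cases hblk : a' ≤ 4*i ∧ 4*i + 3 ≤ b'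
    · left
      intro z hz
      simp only [Finset.mem_filter, Finset.mem_univ, true_and] at hz
      rw [hG0def]
      simp only [Finset.mem_filter, Finset.mem_univ, true_and]
      omega
    · right
      intro z hz
      simp only [Finset.mem_filter, Finset.mem_univ, true_and] at hz
      rw [Finset.mem_compl, hG0def]
      simp only [Finset.mem_filter, Finset.mem_univ, true_and]
      omega
  · -- card of moved set ≤ 8
    have hP1 : ∀ x : Fin (2*n), x ∈ P1 ↔ x ∉ P0 := by
      intro x
      constructor
      · intro h1 h0
        exact (Finset.disjoint_left.mp hdisj h0) h1
      · intro h0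
        have : x ∈ P0 ∪ P1 := by rw [hcov]; exact Finset.mem_univ x
        rcases Finset.mem_union.mp this with h | h
        · exact absurd h h0
        · exact h
    set A : Finset (Fin (2*n)) :=
      Finset.univ.filter (fun z : Fin (2*n) => a' ≤ z.1 ∧ z.1 < a) with hAdef
    set B : Finset (Fin (2*n)) :=
      Finset.univ.filter (fun z : Fin (2*n) => b < z.1 ∧ z.1 < b' + 1) with hBdef
    set C : Finset (Fin (2*n)) :=
      Finset.univ.filter (fun z : Fin (2*n) => b' < z.1 ∧ z.1 < b + 1) with hCdef
    have hsub : (P0 ∩ G0ᶜ) ∪ (P1 ∩ G0) ⊆ A ∪ B ∪ C := by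
      intro z hz
      have hz0 : z ∈ P0 ↔ a ≤ z.1 ∧ z.1 ≤ b := by
        rw [hP0]; simp only [Finset.mem_filter, Finset.mem_univ, true_and]
      have hzG : z ∈ G0 ↔ a' ≤ z.1 ∧ z.1 ≤ b' := by
        rw [hG0def]; simp only [Finset.mem_filter, Finset.mem_univ, true_and]
      simp only [Finset.mem_union, Finset.mem_inter, Finset.mem_compl, hP1 z, hz0, hzG,
        hAdef, hBdef, hCdef, Finset.mem_filter, Finset.mem_univ, true_and] at hz ⊢
      omega
    have hA : A.card ≤ a - a' := card_filter_le18 (2*n) a' a _ (fun z h => h)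
    have hB : B.card ≤ (b' + 1) - (b + 1) :=
      card_filter_le18 (2*n) (b+1) (b'+1) _ (fun z h => by omega)
    have hC : C.card ≤ (b + 1) - (b' + 1) :=
      card_filter_le18 (2*n) (b'+1) (b+1) _ (fun z h => by omega)
    calc ((P0 ∩ G0ᶜ) ∪ (P1 ∩ G0)).card ≤ (A ∪ B ∪ C).card := Finset.card_le_card hsub
      _ ≤ (A ∪ B).card + C.card := Finset.card_union_le _ _
      _ ≤ A.card + B.card + C.card := by
          have := Finset.card_union_le A B
          omega
      _ ≤ 8 := by omega

lemma isSetRect_swap18 {n : ℕ} {P0 P1 : Finset (Fin (2 * n))}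
    {R : Set (Finset (Fin (2 * n)))} (h : IsSetRect P0 P1 R) : IsSetRect P1 P0 R := by
  obtain ⟨S, T, hS, hT, rfl⟩ := h
  refine ⟨T, S, hT, hS, ?_⟩
  ext u
  simp only [Set.mem_setOf_eq]
  constructor
  · rintro ⟨s, hs, t, ht, rfl⟩; exact ⟨t, ht, s, hs, Finset.union_comm s t⟩
  · rintro ⟨t, ht, s, hs, rfl⟩; exact ⟨s, hs, t, ht, Finset.union_comm t s⟩

theorem stmt_18 (n m : ℕ) (hn : 8 ≤ n) (hm : n = 4 * m)
    (P0 P1 : Finset (Fin (2 * n))) (hpart : IsOrderedBalancedPartition n P0 P1)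
    (R : Set (Finset (Fin (2 * n)))) (hR : IsSetRect P0 P1 R) :
    ∃ G0 G1 : Finset (Fin (2 * n)),
      IsOrderedBalancedPartition n G0 G1 ∧ NeatPartition n G0 G1 ∧
      ∃ k : ℕ, k ≤ 256 ∧ ∃ Rs : Fin k → Set (Finset (Fin (2 * n))),
        (∀ i, IsSetRect G0 G1 (Rs i)) ∧
        Pairwise (Function.onFun Disjoint Rs) ∧
        R = ⋃ i, Rs i := by
  obtain ⟨hcov, hdisj, ⟨a, b, hab, hb, hor⟩, hc1, hc2, hc3, hc4⟩ := hpart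
  have hm2 : 2 ≤ m := by omega
  rcases hor with hP0 | hP1
  · obtain ⟨G0, G1, hGpart, hGneat, hD⟩ :=
      main18 n m a b hm hm2 hab hb P0 P1 hP0 hcov hdisj hc1 hc2
    have hGcov := hGpart.1
    obtain ⟨k, hk, Rs, h1, h2, h3⟩ := decomp18 P0 P1 G0 G1 hdisj hGcov hD R hR
    exact ⟨G0, G1, hGpart, hGneat, k, hk, Rs, h1, h2, h3⟩
  · obtain ⟨G0, G1, hGpart, hGneat, hD⟩ :=
      main18 n m a b hm hm2 hab hb P1 P0 hP1
        (by rw [Finset.union_comm]; exact hcov) hdisj.symm hc3 hc4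
    have hGcov := hGpart.1
    obtain ⟨k, hk, Rs, h1, h2, h3⟩ :=
      decomp18 P1 P0 G0 G1 hdisj.symm hGcov hD R (isSetRect_swap18 hR)
    exact ⟨G0, G1, hGpart, hGneat, k, hk, Rs, h1, h2, h3⟩
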